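/- In a convex (submodular) cost game, for every permutation π of the players, the marginal-vector allocation x_{π_i} = c({π_1, …, π_i}) − c({π_1, …, π_{i−1}}) belongs to the core. -/

import Mathlib

open Finset

/-- Given an ordering `σ : Fin n ≃ V` of the players, the marginal-vector
allocation assigns to player `i` its marginal cost contribution to the
coalition of all players preceding it:
`x_i = c({predecessors of i, inclusive}) − c({strict predecessors of i})`. -/
noncomputable def marginalVector {V : Type*} [Fintype V] [DecidableEq V]
    (c : Finset V → ℝ) (σ : Fin (Fintype.card V) ≃ V) (i : V) : ℝ :=
  c (Finset.univ.filter fun j => σ.symm j ≤ σ.symm i) -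
    c (Finset.univ.filter fun j => σ.symm j < σ.symm i)

/-- in a convex (submodular) cost game with `c(∅) = 0`, for every
permutation (ordering) of the players, the marginal-vector allocation is
efficient and lies in the core. -/
theorem marginal_vector_mem_core {V : Type*} [Fintype V] [DecidableEq V]
    (c : Finset V → ℝ) (h0 : c ∅ = 0)
    (hconv : ∀ S T : Finset V, ∀ i : V, S ⊆ T → i ∉ T →
      c (insert i T) - c T ≤ c (insert i S) - c S)
    (σ : Fin (Fintype.card V) ≃ V) :
    (∑ i, marginalVector c σ i = c Finset.univ) ∧
    (∀ S : Finset V, ∑ i ∈ S, marginalVector c σ i ≤ c S) := by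
  classical
  have hP : ∀ i : V, (Finset.univ.filter fun j => σ.symm j ≤ σ.symm i) =
      insert i (Finset.univ.filter fun j => σ.symm j < σ.symm i) := by
    intro i
    ext j
    simp only [mem_filter, mem_insert, mem_univ, true_and]
    constructor
    · intro h
      rcases lt_or_eq_of_le h with h | h
      · exact Or.inr h
      · exact Or.inl (σ.symm.injective h)
    · rintro (rfl | h)
      · exact le_rfl
      · exact le_of_lt h
  have hPn : ∀ i : V, i ∉ (Finset.univ.filter fun j => σ.symm j < σ.symm i) := by
    intro i
    simp
  have key : ∀ S : Finset V, (∑ i ∈ S, marginalVector c σ i ≤ c S) ∧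
      ((∀ i ∈ S, ∀ j : V, σ.symm j < σ.symm i → j ∈ S) →
        ∑ i ∈ S, marginalVector c σ i = c S) := by
    intro S
    induction S using Finset.strongInduction with
    | _ S ih =>
      rcases S.eq_empty_or_nonempty with rfl | hne
      · simp [h0]
      · obtain ⟨m, hm, hmax⟩ := S.exists_max_image (fun i => σ.symm i) hne
        have hss : S.erase m ⊂ S := Finset.erase_ssubset hm
        have hsub : S.erase m ⊆ Finset.univ.filter fun j => σ.symm j < σ.symm m := by
          intro j hj
          rw [Finset.mem_erase] at hj
          simp only [mem_filter, mem_univ, true_and]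
          exact lt_of_le_of_ne (hmax j hj.2) (fun h => hj.1 (σ.symm.injective h))
        have hsum : ∑ i ∈ S, marginalVector c σ i =
            marginalVector c σ m + ∑ i ∈ S.erase m, marginalVector c σ i :=
          (Finset.add_sum_erase S _ hm).symm
        have hins : insert m (S.erase m) = S := Finset.insert_erase hm
        constructor
        · have h1 : marginalVector c σ m ≤ c (insert m (S.erase m)) - c (S.erase m) := by
            rw [marginalVector, hP m]
            exact hconv _ _ _ hsub (hPn m)
          have h2 := (ih _ hss).1
          rw [hsum]
          calc marginalVector c σ m + ∑ i ∈ S.erase m, marginalVector c σ i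
              ≤ (c (insert m (S.erase m)) - c (S.erase m)) + c (S.erase m) :=
                add_le_add h1 h2
            _ = c S := by rw [hins]; ring
        · intro hdown
          have hPe : (Finset.univ.filter fun j => σ.symm j < σ.symm m) = S.erase m := by
            apply Finset.Subset.antisymm _ hsub
            intro j hj
            simp only [mem_filter, mem_univ, true_and] at hj
            rw [Finset.mem_erase]
            exact ⟨fun h => absurd hj (by rw [h]; exact lt_irrefl _), hdown m hm j hj⟩
          have hdown' : ∀ i ∈ S.erase m, ∀ j : V, σ.symm j < σ.symm i → j ∈ S.erase m := by
            intro i hi j hji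
            rw [Finset.mem_erase] at hi ⊢
            refine ⟨fun h => ?_, hdown i hi.2 j hji⟩
            subst h
            exact absurd (hmax i hi.2) (not_le_of_gt hji)
          have h2 := (ih _ hss).2 hdown'
          rw [hsum, h2, marginalVector, hP m, hPe]
          rw [hins]
          ring
  exact ⟨(key Finset.univ).2 (fun _ _ _ _ => Finset.mem_univ _), fun S => (key S).1⟩
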